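/- Let 𝒪 be a finite family of pairwise disjoint closed axis-parallel rectangles in ℝ² (obstacles). Let p, q ∈ ℝ² lie outside the interior of every obstacle, and let o be a point of B(p,q) outside the interior of every obstacle. Then for every continuous path γ : [0,1] → ℝ² from p to q whose image is disjoint from the interior of every obstacle and whose L1-length (total variation with respect to the L1 norm) equals L < ∞, there exists a point r in the image of γ such that σ₁(o,r) ≤ L, where σ₁ denotes the L1-geodesic distance amid the obstacles. -/

import Mathlib

open scoped ENNReal

namespace GeoSpanner

/-- Points of `ℝ^d`. -/
abbrev Pt (d : ℕ) := Fin d → ℝ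

/-- The L1 norm `‖x‖₁ = ∑ |xᵢ|`. -/
def nrm1 {d : ℕ} (x : Pt d) : ℝ := ∑ i, |x i|

/-- The Euclidean (L2) norm. -/
noncomputable def nrm2 {d : ℕ} (x : Pt d) : ℝ := Real.sqrt (∑ i, (x i) ^ 2)

/-- An axis-parallel box: a product of closed bounded intervals. -/
def IsBox {d : ℕ} (B : Set (Pt d)) : Prop := ∃ a b : Pt d, a ≤ b ∧ B = Set.Icc a b

/-- A valid family of obstacles: finitely many pairwise disjoint closed
axis-parallel boxes. -/
def IsObstacleFamily {d : ℕ} (O : Finset (Set (Pt d))) : Prop :=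
  (∀ B ∈ O, IsBox B) ∧ (O : Set (Set (Pt d))).Pairwise Disjoint

/-- The free space: points outside the interior of every obstacle. -/
def free {d : ℕ} (O : Finset (Set (Pt d))) : Set (Pt d) :=
  {x | ∀ B ∈ O, x ∉ interior B}

/-- Length of the path `γ` restricted to `[0,1]`, measured as total variation
with respect to the norm `nrm`. -/
noncomputable def pathLen {d : ℕ} (nrm : Pt d → ℝ) (γ : ℝ → Pt d) : ℝ≥0∞ :=
  ⨆ (n : ℕ) (t : Fin (n + 1) → ℝ)
    (_ : Monotone t ∧ ∀ i, t i ∈ Set.Icc (0 : ℝ) 1),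
      ∑ i : Fin n, ENNReal.ofReal (nrm (γ (t i.succ) - γ (t i.castSucc)))

/-- `γ` is a continuous path from `p` to `q` staying inside the region `F`. -/
def IsPathIn {d : ℕ} (F : Set (Pt d)) (p q : Pt d) (γ : ℝ → Pt d) : Prop :=
  ContinuousOn γ (Set.Icc 0 1) ∧ γ 0 = p ∧ γ 1 = q ∧
    ∀ t ∈ Set.Icc (0 : ℝ) 1, γ t ∈ F

/-- Geodesic distance from `p` to `q` inside the region `F`, with path lengths
measured with respect to the norm `nrm`. -/
noncomputable def geo {d : ℕ} (nrm : Pt d → ℝ) (F : Set (Pt d)) (p q : Pt d) : ℝ≥0∞ :=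
  ⨅ (γ : ℝ → Pt d) (_ : IsPathIn F p q γ), pathLen nrm γ

/-- `B(p,q)`: the closed axis-parallel box with opposite corners `p` and `q`. -/
def corners {d : ℕ} (p q : Pt d) : Set (Pt d) := Set.uIcc p q

/-- Graph distance over the edge set `E` with edge weights given by `σ`. -/
noncomputable def graphDist {d : ℕ} (σ : Pt d → Pt d → ℝ≥0∞) (E : Set (Sym2 (Pt d)))
    (p q : Pt d) : ℝ≥0∞ :=
  ⨅ (n : ℕ) (x : Fin (n + 1) → Pt d)
    (_ : x 0 = p ∧ x (Fin.last n) = q ∧ ∀ i : Fin n, s(x i.castSucc, x i.succ) ∈ E),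
      ∑ i : Fin n, σ (x i.castSucc) (x i.succ)

end GeoSpanner

namespace GeoSpanner

open Classical in
noncomputable def boxLo (B : Set (Pt 2)) : Pt 2 := if h : IsBox B then h.choose else 0
open Classical in
noncomputable def boxHi (B : Set (Pt 2)) : Pt 2 := if h : IsBox B then h.choose_spec.choose else 0
lemma box_spec {B : Set (Pt 2)} (h : IsBox B) :
    boxLo B ≤ boxHi B ∧ B = Set.Icc (boxLo B) (boxHi B) := by
  rw [boxLo, boxHi, dif_pos h, dif_pos h]; exact h.choose_spec.choose_spec
lemma mem_interior_box {b c x : Pt 2} :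
    x ∈ interior (Set.Icc b c) ↔ ∀ i, b i < x i ∧ x i < c i := by
  rw [← Set.pi_univ_Icc, interior_pi_set Set.finite_univ]
  simp [Set.mem_pi, Set.mem_Ioo, forall_and]
lemma armU_unblocked (O : Finset (Set (Pt 2))) (a : Pt 2)
    (hb : ¬ ∃ B ∈ O, ∃ z ∈ interior B, z 0 = a 0 ∧ a 1 ≤ z 1) :
    ∃ u : ℝ → Pt 2, Continuous u ∧ (∀ s ≤ 0, u s = a) ∧ (∀ s, u s ∈ free O) ∧
      (∀ s, 0 ≤ s → u s 1 - u s 0 = a 1 - a 0 + s) ∧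
      (∀ s t, s ≤ t → u t 0 ≤ u s 0) ∧ (∀ s t, s ≤ t → u s 1 ≤ u t 1) := by
  refine ⟨fun s => ![a 0, a 1 + max s 0], ?_, ?_, ?_, ?_, ?_, ?_⟩
  · apply continuous_pi; intro i; fin_cases i <;> simp <;> fun_prop
  · intro s hs; funext i; fin_cases i <;> simp [max_eq_right hs]
  · intro s B hB hint
    exact hb ⟨B, hB, _, hint, by simp, by simp [le_add_of_nonneg_right (le_max_right s 0)]⟩
  · intro s hs; simp [max_eq_left hs]; ring
  · intro s t _; simp
  · intro s t hst; simp [add_le_add_left, max_le_max hst (le_refl (0:ℝ))]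

lemma armU : ∀ (n : ℕ) (O : Finset (Set (Pt 2))), O.card ≤ n → IsObstacleFamily O →
    ∀ a, a ∈ free O →
    ∃ u : ℝ → Pt 2, Continuous u ∧ (∀ s ≤ 0, u s = a) ∧ (∀ s, u s ∈ free O) ∧
      (∀ s, 0 ≤ s → u s 1 - u s 0 = a 1 - a 0 + s) ∧
      (∀ s t, s ≤ t → u t 0 ≤ u s 0) ∧ (∀ s t, s ≤ t → u s 1 ≤ u t 1) := by
  intro n
  induction n with
  | zero =>
    intro O hcard hO a ha
    have : O = ∅ := Finset.card_eq_zero.1 (Nat.le_zero.1 hcard)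
    subst this
    exact armU_unblocked ∅ a (by simp)
  | succ n ih =>
    intro O hcard hO a ha
    by_cases hb : ∃ B ∈ O, ∃ z ∈ interior B, z 0 = a 0 ∧ a 1 ≤ z 1
    · classical
      obtain ⟨B₀, hB₀O, z₀, hz₀, hz₀0, hz₀1⟩ := hb
      set Obl := O.filter (fun B => ∃ z ∈ interior B, z 0 = a 0 ∧ a 1 ≤ z 1) with hOblDef
      have hne : Obl.Nonempty := ⟨B₀, Finset.mem_filter.2 ⟨hB₀O, z₀, hz₀, hz₀0, hz₀1⟩⟩
      obtain ⟨B, hBObl, hBmin⟩ := Finset.exists_min_image Obl (fun B => boxLo B 1) hne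
      obtain ⟨hBO, z, hz, hz0, hz1⟩ := Finset.mem_filter.1 hBObl
      obtain ⟨hbc, hBeq⟩ := box_spec (hO.1 B hBO)
      set b := boxLo B with hbDef
      set c := boxHi B with hcDef
      have hzi : ∀ i, b i < z i ∧ z i < c i := by
        rw [hBeq] at hz; exact mem_interior_box.1 hz
      have hb0 : b 0 < a 0 := hz0 ▸ (hzi 0).1
      have hc0 : a 0 < c 0 := hz0 ▸ (hzi 0).2
      have ha1b1 : a 1 ≤ b 1 := by
        by_contra h
        push_neg at h
        refine ha B hBO ?_
        rw [hBeq]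
        refine mem_interior_box.2 (fun i => ?_)
        fin_cases i
        · exact ⟨hb0, hc0⟩
        · exact ⟨h, lt_of_le_of_lt hz1 (hzi 1).2⟩
      set s₁ := b 1 - a 1 with hs₁Def
      set s₂ := s₁ + (a 0 - b 0) with hs₂Def
      have hs₁0 : 0 ≤ s₁ := by linarith [hs₁Def]
      have hs₂1 : s₁ ≤ s₂ := by linarith [hs₂Def]
      have hs₂0 : 0 ≤ s₂ := le_trans hs₁0 hs₂1
      -- membership of horizontal-edge points in B
      have hmemB : ∀ x : Pt 2, b 0 ≤ x 0 → x 0 ≤ a 0 → x 1 = b 1 → x ∈ B := by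
        intro x h1 h2 h3
        rw [hBeq, Set.mem_Icc]
        constructor <;> (rw [Pi.le_def]; intro i; fin_cases i)
        · exact h1
        · exact le_of_eq h3.symm
        · exact le_trans h2 hc0.le
        · exact le_trans (le_of_eq h3) (hbc 1)
      have hfreeB : ∀ x : Pt 2, x ∈ B → x ∉ interior B → x ∈ free O := by
        intro x hxB hxint B' hB' hxint'
        by_cases hBB' : B' = B
        · exact hxint (hBB' ▸ hxint')
        · exact Set.disjoint_left.1
            (hO.2 (Finset.mem_coe.2 hB') (Finset.mem_coe.2 hBO) hBB')
            (interior_subset hxint') hxB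
      have hhor : ∀ x : Pt 2, b 0 ≤ x 0 → x 0 ≤ a 0 → x 1 = b 1 → x ∈ free O := by
        intro x h1 h2 h3
        refine hfreeB x (hmemB x h1 h2 h3) ?_
        intro hint
        rw [hBeq] at hint
        have := (mem_interior_box.1 hint 1).1
        rw [h3] at this
        exact lt_irrefl _ this
      have hvert : ∀ y : ℝ, a 1 ≤ y → y ≤ b 1 → (![a 0, y] : Pt 2) ∈ free O := by
        intro y hy1 hy2 B' hB' hint
        have hB'Obl : B' ∈ Obl := Finset.mem_filter.2 ⟨hB', ![a 0, y], hint, by simp, by simpa⟩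
        have hmin := hBmin B' hB'Obl
        obtain ⟨hbc', hBeq'⟩ := box_spec (hO.1 B' hB')
        rw [hBeq'] at hint
        have := (mem_interior_box.1 hint 1).1
        simp at this
        linarith
      have hbfree : b ∈ free O := hhor b le_rfl hb0.le rfl
      have hbfree' : b ∈ free (O.erase B) := fun B' hB' => hbfree B' (Finset.mem_of_mem_erase hB')
      have hOF' : IsObstacleFamily (O.erase B) :=
        ⟨fun B' h => hO.1 B' (Finset.mem_of_mem_erase h),
         hO.2.mono (Finset.coe_subset.2 (Finset.erase_subset _ _))⟩
      have hcard' : (O.erase B).card ≤ n := by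
        have := Finset.card_erase_of_mem hBO; omega
      obtain ⟨u', hu'c, hu'0, hu'F, hu'P, hu'mx, hu'my⟩ := ih (O.erase B) hcard' hOF' b hbfree'
      set v : ℝ → Pt 2 :=
        fun s => ![max (b 0) (a 0 - max (s - s₁) 0), min (a 1 + max s 0) (b 1)] with hvDef
      have hv0lo : ∀ s, b 0 ≤ v s 0 := fun s => by simp [hvDef]
      have hv0hi : ∀ s, v s 0 ≤ a 0 := fun s => by
        simp only [hvDef, Matrix.cons_val_zero]
        exact max_le hb0.le (by linarith [le_max_right (s - s₁) (0:ℝ)])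
      have hv1lo : ∀ s, a 1 ≤ v s 1 := fun s => by
        simp only [hvDef, Matrix.cons_val_one, Matrix.head_cons]
        exact le_min (le_add_of_nonneg_right (le_max_right s 0)) ha1b1
      have hv1hi : ∀ s, v s 1 ≤ b 1 := fun s => by simp [hvDef]
      have hvlow : ∀ s, s ≤ s₁ → v s = ![a 0, a 1 + max s 0] := by
        intro s hs
        have h1 : max (s - s₁) 0 = 0 := max_eq_right (by linarith)
        have h2 : a 1 + max s 0 ≤ b 1 := by
          have h := max_le hs hs₁0
          linarith [hs₁Def]
        funext i; fin_cases i <;> simp [hvDef, h1, max_eq_right hb0.le, min_eq_left h2]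
      have hvhigh : ∀ s, s₁ ≤ s → s ≤ s₂ → v s = ![a 0 - (s - s₁), b 1] := by
        intro s hs1 hs2
        have h1 : max (s - s₁) 0 = s - s₁ := max_eq_left (by linarith)
        have h2 : max s 0 = s := max_eq_left (le_trans hs₁0 hs1)
        have h3 : b 0 ≤ a 0 - (s - s₁) := by linarith [hs₂Def]
        have h4 : b 1 ≤ a 1 + s := by linarith [hs₁Def]
        funext i; fin_cases i <;> simp [hvDef, h1, h2, max_eq_right h3, min_eq_right h4]
      have hvfree : ∀ s, s ≤ s₂ → v s ∈ free O := by
        intro s hs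
        rcases le_total s s₁ with h | h
        · rw [hvlow s h]
          refine hvert _ (le_add_of_nonneg_right (le_max_right s 0)) ?_
          have hmx := max_le h hs₁0
          linarith [hs₁Def]
        · rw [hvhigh s h hs]
          refine hhor _ ?_ ?_ rfl
          · show b 0 ≤ a 0 - (s - s₁)
            linarith [hs₂Def]
          · show a 0 - (s - s₁) ≤ a 0
            linarith
      have hvs₂ : v s₂ = b := by
        rw [hvhigh s₂ hs₂1 le_rfl]
        funext i; fin_cases i
        · show a 0 - (s₂ - s₁) = b 0
          rw [hs₂Def]; ring
        · rfl
      have hvmx : ∀ s t, s ≤ t → v t 0 ≤ v s 0 := by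
        intro s t hst
        simp only [hvDef, Matrix.cons_val_zero]
        exact max_le_max le_rfl (sub_le_sub_left (max_le_max (sub_le_sub_right hst _) le_rfl) _)
      have hvmy : ∀ s t, s ≤ t → v s 1 ≤ v t 1 := by
        intro s t hst
        simp only [hvDef, Matrix.cons_val_one, Matrix.head_cons]
        exact min_le_min (by linarith [max_le_max hst (le_refl (0:ℝ))]) le_rfl
      classical
      refine ⟨fun s => if s ≤ s₂ then v s else u' (s - s₂), ?_, ?_, ?_, ?_, ?_, ?_⟩
      · refine Continuous.if_le ?_ (hu'c.comp (continuous_id.sub continuous_const))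
          continuous_id continuous_const ?_
        · apply continuous_pi; intro i; fin_cases i <;> simp [hvDef] <;> fun_prop
        · intro s hs
          rw [hs, hvs₂, show s₂ - s₂ = 0 by ring, hu'0 0 le_rfl]
      · intro s hs
        beta_reduce
        rw [if_pos (le_trans hs hs₂0), hvlow s (le_trans hs hs₁0)]
        funext i; fin_cases i <;> simp [max_eq_right hs]
      · intro s
        beta_reduce
        by_cases hs : s ≤ s₂
        · rw [if_pos hs]; exact hvfree s hs
        · push_neg at hs
          rw [if_neg (not_le.2 hs)]
          intro B' hB'
          by_cases hBB' : B' = B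
          · subst hBB'
            intro hint
            rw [hBeq] at hint
            have h1 := (mem_interior_box.1 hint 0).1
            have h2 : u' (s - s₂) 0 ≤ b 0 := by
              have := hu'mx 0 (s - s₂) (by linarith)
              rwa [hu'0 0 le_rfl] at this
            linarith
          · exact hu'F (s - s₂) B' (Finset.mem_erase.2 ⟨hBB', hB'⟩)
      · intro s hs
        beta_reduce
        by_cases hc : s ≤ s₂
        · rw [if_pos hc]
          rcases le_total s s₁ with h | h
          · rw [hvlow s h]
            show a 1 + max s 0 - a 0 = a 1 - a 0 + s
            rw [max_eq_left hs]; ring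
          · rw [hvhigh s h hc]
            show b 1 - (a 0 - (s - s₁)) = a 1 - a 0 + s
            linarith [hs₁Def]
        · push_neg at hc
          rw [if_neg (not_le.2 hc)]
          have h := hu'P (s - s₂) (by linarith)
          linarith [hs₂Def, hs₁Def]
      · intro s t hst
        beta_reduce
        by_cases hcs : s ≤ s₂ <;> by_cases hct : t ≤ s₂
        · rw [if_pos hcs, if_pos hct]; exact hvmx s t hst
        · rw [if_pos hcs, if_neg hct]
          push_neg at hct
          calc u' (t - s₂) 0 ≤ u' 0 0 := hu'mx 0 (t - s₂) (by linarith)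
            _ = b 0 := by rw [hu'0 0 le_rfl]
            _ ≤ v s 0 := hv0lo s
        · exact absurd (hst.trans hct) hcs
        · rw [if_neg hcs, if_neg hct]
          exact hu'mx _ _ (by linarith)
      · intro s t hst
        beta_reduce
        by_cases hcs : s ≤ s₂ <;> by_cases hct : t ≤ s₂
        · rw [if_pos hcs, if_pos hct]; exact hvmy s t hst
        · rw [if_pos hcs, if_neg hct]
          push_neg at hct
          calc v s 1 ≤ b 1 := hv1hi s
            _ = u' 0 1 := by rw [hu'0 0 le_rfl]
            _ ≤ u' (t - s₂) 1 := hu'my 0 (t - s₂) (by linarith)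
        · exact absurd (hst.trans hct) hcs
        · rw [if_neg hcs, if_neg hct]
          exact hu'my _ _ (by linarith)
    · exact armU_unblocked O a hb

def refl2 (e : Pt 2) (x : Pt 2) : Pt 2 := fun i => e i * x i

lemma refl2_invol {e : Pt 2} (he : ∀ i, e i = 1 ∨ e i = -1) (x : Pt 2) :
    refl2 e (refl2 e x) = x := by
  funext i; rcases he i with h | h <;> simp [refl2, h]

lemma refl2_cont (e : Pt 2) : Continuous (refl2 e) :=
  continuous_pi fun i => continuous_const.mul (continuous_apply i)

lemma mem_refl2_image {e : Pt 2} (he : ∀ i, e i = 1 ∨ e i = -1) {S : Set (Pt 2)} {x : Pt 2} :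
    x ∈ refl2 e '' S ↔ refl2 e x ∈ S := by
  constructor
  · rintro ⟨y, hy, rfl⟩; rwa [refl2_invol he]
  · intro h; exact ⟨refl2 e x, h, refl2_invol he x⟩

noncomputable def refl2Homeo (e : Pt 2) (he : ∀ i, e i = 1 ∨ e i = -1) : Pt 2 ≃ₜ Pt 2 :=
  { toFun := refl2 e, invFun := refl2 e,
    left_inv := refl2_invol he, right_inv := refl2_invol he,
    continuous_toFun := refl2_cont e, continuous_invFun := refl2_cont e }

lemma refl2_interior {e : Pt 2} (he : ∀ i, e i = 1 ∨ e i = -1) (S : Set (Pt 2)) :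
    interior (refl2 e '' S) = refl2 e '' interior S :=
  ((refl2Homeo e he).image_interior S).symm

lemma refl2_flip {e b c x : ℝ} (he : e = 1 ∨ e = -1) (hbc : b ≤ c) :
    (b ≤ e * x ∧ e * x ≤ c) ↔ (min (e * b) (e * c) ≤ x ∧ x ≤ max (e * b) (e * c)) := by
  rcases he with rfl | rfl
  · simp [min_eq_left hbc, max_eq_right hbc]
  · rw [min_eq_right (by linarith : (-1:ℝ) * c ≤ (-1:ℝ) * b),
      max_eq_left (by linarith : (-1:ℝ) * c ≤ (-1:ℝ) * b)]
    constructor <;> rintro ⟨h1, h2⟩ <;> constructor <;> linarith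

lemma refl2_isBox {e : Pt 2} (he : ∀ i, e i = 1 ∨ e i = -1) {B : Set (Pt 2)} (h : IsBox B) :
    IsBox (refl2 e '' B) := by
  obtain ⟨b, c, hbc, rfl⟩ := h
  refine ⟨fun i => min (e i * b i) (e i * c i), fun i => max (e i * b i) (e i * c i),
    fun i => min_le_max, ?_⟩
  ext x
  rw [mem_refl2_image he, Set.mem_Icc, Set.mem_Icc, Pi.le_def, Pi.le_def, Pi.le_def, Pi.le_def]
  constructor
  · rintro ⟨h1, h2⟩
    exact ⟨fun i => ((refl2_flip (he i) (hbc i)).1 ⟨h1 i, h2 i⟩).1,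
           fun i => ((refl2_flip (he i) (hbc i)).1 ⟨h1 i, h2 i⟩).2⟩
  · rintro ⟨h1, h2⟩
    exact ⟨fun i => ((refl2_flip (he i) (hbc i)).2 ⟨h1 i, h2 i⟩).1,
           fun i => ((refl2_flip (he i) (hbc i)).2 ⟨h1 i, h2 i⟩).2⟩

open Classical in
lemma refl2_family {e : Pt 2} (he : ∀ i, e i = 1 ∨ e i = -1) {O : Finset (Set (Pt 2))}
    (hO : IsObstacleFamily O) : IsObstacleFamily (O.image (fun B => refl2 e '' B)) := by
  constructor
  · intro B' hB'
    obtain ⟨B, hB, rfl⟩ := Finset.mem_image.1 hB'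
    exact refl2_isBox he (hO.1 B hB)
  · intro S₁ hS₁ S₂ hS₂ hne
    obtain ⟨B₁, hB₁, rfl⟩ := Finset.mem_image.1 (Finset.mem_coe.1 hS₁)
    obtain ⟨B₂, hB₂, rfl⟩ := Finset.mem_image.1 (Finset.mem_coe.1 hS₂)
    have hBne : B₁ ≠ B₂ := fun h => hne (by rw [h])
    have hd := hO.2 (Finset.mem_coe.2 hB₁) (Finset.mem_coe.2 hB₂) hBne
    refine Set.disjoint_image_image (fun y hy z hz heq => ?_)
    have : y = z := by rw [← refl2_invol he y, heq, refl2_invol he]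
    exact Set.disjoint_left.1 hd hy (this ▸ hz)

open Classical in
lemma refl2_free {e : Pt 2} (he : ∀ i, e i = 1 ∨ e i = -1) (O : Finset (Set (Pt 2)))
    (x : Pt 2) : x ∈ free (O.image (fun B => refl2 e '' B)) ↔ refl2 e x ∈ free O := by
  constructor
  · intro h B hB hint
    have := h (refl2 e '' B) (Finset.mem_image_of_mem _ hB)
    rw [refl2_interior he] at this
    exact this ((mem_refl2_image he).2 hint)
  · intro h B' hB' hint
    obtain ⟨B, hB, rfl⟩ := Finset.mem_image.1 hB'
    rw [refl2_interior he] at hint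
    exact h B hB ((mem_refl2_image he).1 hint)

lemma armE (O : Finset (Set (Pt 2))) (hO : IsObstacleFamily O) (a : Pt 2) (ha : a ∈ free O)
    (e : Pt 2) (he : ∀ i, e i = 1 ∨ e i = -1) :
    ∃ w : ℝ → Pt 2, Continuous w ∧ (∀ s ≤ 0, w s = a) ∧ (∀ s, w s ∈ free O) ∧
      (∀ s, 0 ≤ s → e 1 * w s 1 - e 0 * w s 0 = e 1 * a 1 - e 0 * a 0 + s) ∧
      (∀ s t, s ≤ t → e 0 * w t 0 ≤ e 0 * w s 0) ∧
      (∀ s t, s ≤ t → e 1 * w s 1 ≤ e 1 * w t 1) := by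
  classical
  have hsq : ∀ i, e i * e i = 1 := fun i => by rcases he i with h | h <;> rw [h] <;> norm_num
  have ha' : refl2 e a ∈ free (O.image (fun B => refl2 e '' B)) := by
    rw [refl2_free he, refl2_invol he]; exact ha
  obtain ⟨u, huc, hu0, huF, huP, humx, humy⟩ :=
    armU (O.image (fun B => refl2 e '' B)).card _ le_rfl (refl2_family he hO) _ ha'
  have hwval : ∀ s i, refl2 e (u s) i = e i * u s i := fun s i => rfl
  refine ⟨fun s => refl2 e (u s), (refl2_cont e).comp huc, ?_, ?_, ?_, ?_, ?_⟩
  · intro s hs; beta_reduce; rw [hu0 s hs]; exact refl2_invol he a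
  · intro s; exact (refl2_free he O _).1 (huF s)
  · intro s hs
    beta_reduce
    have h : u s 1 - u s 0 = e 1 * a 1 - e 0 * a 0 + s := huP s hs
    rw [hwval, hwval, ← mul_assoc, ← mul_assoc, hsq 1, hsq 0, one_mul, one_mul]
    exact h
  · intro s t hst
    beta_reduce
    rw [hwval, hwval, ← mul_assoc, hsq 0, one_mul, ← mul_assoc, hsq 0, one_mul]
    exact humx s t hst
  · intro s t hst
    beta_reduce
    rw [hwval, hwval, ← mul_assoc, hsq 1, one_mul, ← mul_assoc, hsq 1, one_mul]
    exact humy s t hst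


lemma nrm1_pair (x : Pt 2) : nrm1 x = |x 0| + |x 1| := by
  rw [nrm1, Fin.sum_univ_two]

lemma nrm1_nonneg (x : Pt 2) : 0 ≤ nrm1 x := by
  rw [nrm1_pair]; positivity

lemma nrm1_sub_comm (x y : Pt 2) : nrm1 (x - y) = nrm1 (y - x) := by
  rw [nrm1_pair, nrm1_pair]
  simp only [Pi.sub_apply, abs_sub_comm]

lemma tele_sum (n : ℕ) (f : Fin (n + 1) → ℝ) :
    ∑ i : Fin n, (f i.succ - f i.castSucc) = f (Fin.last n) - f 0 := by
  induction n with
  | zero => simp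
  | succ n ih =>
    rw [Fin.sum_univ_castSucc]
    have h := ih (fun i => f i.castSucc)
    simp only [Fin.succ_castSucc] at h ⊢
    rw [h]
    simp [Fin.succ_last]

lemma pathLen_ge (γ : ℝ → Pt 2) {t : ℝ} (ht : t ∈ Set.Icc (0:ℝ) 1) :
    ENNReal.ofReal (nrm1 (γ t - γ 0)) + ENNReal.ofReal (nrm1 (γ 1 - γ t)) ≤ pathLen nrm1 γ := by
  rw [pathLen]
  refine le_iSup_of_le 2 ?_
  refine le_iSup_of_le ![0, t, 1] ?_
  refine le_iSup_of_le ⟨?_, ?_⟩ ?_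
  · intro i j hij
    fin_cases i <;> fin_cases j <;> simp_all <;> first | exact ht.1 | exact ht.2 | linarith [ht.1, ht.2] | omega
  · intro i; fin_cases i <;> simp [ht.1, ht.2] <;> constructor <;> linarith [ht.1, ht.2]
  · rw [Fin.sum_univ_two]
    have e1 : Fin.succ (0 : Fin 2) = 1 := rfl
    have e2 : Fin.castSucc (0 : Fin 2) = 0 := rfl
    have e3 : Fin.succ (1 : Fin 2) = 2 := rfl
    have e4 : Fin.castSucc (1 : Fin 2) = 1 := rfl
    rw [e1, e2, e3, e4]
    simp [Matrix.cons_val_zero, Matrix.cons_val_one]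
lemma pathLen_le (η : ℝ → Pt 2)
    (hmono : ∀ i : Fin 2, Monotone (fun v => η v i) ∨ Antitone (fun v => η v i)) :
    pathLen nrm1 η ≤ ENNReal.ofReal (nrm1 (η 1 - η 0)) := by
  rw [pathLen]
  refine iSup_le fun n => iSup_le fun t => iSup_le fun ht => ?_
  obtain ⟨hmt, hmem⟩ := ht
  have key : ∀ i : Fin 2, ∑ k : Fin n, ENNReal.ofReal |η (t k.succ) i - η (t k.castSucc) i|
      ≤ ENNReal.ofReal |η 1 i - η 0 i| := by
    intro i
    rcases hmono i with hm | hm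
    · have habs : ∀ k : Fin n, |η (t k.succ) i - η (t k.castSucc) i|
          = η (t k.succ) i - η (t k.castSucc) i := fun k =>
        abs_of_nonneg (by
          have := hm (hmt (Fin.castSucc_lt_succ : k.castSucc < k.succ).le)
          linarith)
      calc ∑ k : Fin n, ENNReal.ofReal |η (t k.succ) i - η (t k.castSucc) i|
          = ENNReal.ofReal (∑ k : Fin n, (η (t k.succ) i - η (t k.castSucc) i)) := by
            rw [ENNReal.ofReal_sum_of_nonneg (fun k _ => by
              have := hm (hmt (Fin.castSucc_lt_succ : k.castSucc < k.succ).le); linarith)]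
            exact Finset.sum_congr rfl fun k _ => by rw [habs k]
        _ = ENNReal.ofReal (η (t (Fin.last n)) i - η (t 0) i) := by
            rw [tele_sum n (fun k => η (t k) i)]
        _ ≤ ENNReal.ofReal |η 1 i - η 0 i| := by
            apply ENNReal.ofReal_le_ofReal
            have h1 : η (t (Fin.last n)) i ≤ η 1 i := hm (hmem (Fin.last n)).2
            have h2 : η 0 i ≤ η (t 0) i := hm (hmem 0).1
            have := le_abs_self (η 1 i - η 0 i)
            linarith
    · have habs : ∀ k : Fin n, |η (t k.succ) i - η (t k.castSucc) i|
          = η (t k.castSucc) i - η (t k.succ) i := fun k =>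
        abs_of_nonpos (by
          have := hm (hmt (Fin.castSucc_lt_succ : k.castSucc < k.succ).le)
          linarith) |>.trans (by ring)
      calc ∑ k : Fin n, ENNReal.ofReal |η (t k.succ) i - η (t k.castSucc) i|
          = ENNReal.ofReal (∑ k : Fin n, (η (t k.castSucc) i - η (t k.succ) i)) := by
            rw [ENNReal.ofReal_sum_of_nonneg (fun k _ => by
              have := hm (hmt (Fin.castSucc_lt_succ : k.castSucc < k.succ).le); linarith)]
            exact Finset.sum_congr rfl fun k _ => by rw [habs k]
        _ = ENNReal.ofReal (η (t 0) i - η (t (Fin.last n)) i) := by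
            have := tele_sum n (fun k => η (t k) i)
            have h2 : ∑ k : Fin n, (η (t k.castSucc) i - η (t k.succ) i)
                = -(∑ k : Fin n, (η (t k.succ) i - η (t k.castSucc) i)) := by
              rw [← Finset.sum_neg_distrib]
              exact Finset.sum_congr rfl fun k _ => by ring
            rw [h2, this]
            congr 1; ring
        _ ≤ ENNReal.ofReal |η 1 i - η 0 i| := by
            apply ENNReal.ofReal_le_ofReal
            have h1 : η 1 i ≤ η (t (Fin.last n)) i := hm (hmem (Fin.last n)).2
            have h2 : η (t 0) i ≤ η 0 i := hm (hmem 0).1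
            have := neg_abs_le (η 1 i - η 0 i)
            linarith [abs_nonneg (η 1 i - η 0 i), neg_le_abs (η 1 i - η 0 i)]
  calc ∑ k : Fin n, ENNReal.ofReal (nrm1 (η (t k.succ) - η (t k.castSucc)))
      = ∑ k : Fin n, (ENNReal.ofReal |η (t k.succ) 0 - η (t k.castSucc) 0|
          + ENNReal.ofReal |η (t k.succ) 1 - η (t k.castSucc) 1|) := by
        refine Finset.sum_congr rfl fun k _ => ?_
        rw [nrm1_pair]
        simp only [Pi.sub_apply]
        rw [ENNReal.ofReal_add (abs_nonneg _) (abs_nonneg _)]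
    _ = (∑ k : Fin n, ENNReal.ofReal |η (t k.succ) 0 - η (t k.castSucc) 0|)
          + ∑ k : Fin n, ENNReal.ofReal |η (t k.succ) 1 - η (t k.castSucc) 1| :=
        Finset.sum_add_distrib
    _ ≤ ENNReal.ofReal |η 1 0 - η 0 0| + ENNReal.ofReal |η 1 1 - η 0 1| :=
        add_le_add (key 0) (key 1)
    _ = ENNReal.ofReal (nrm1 (η 1 - η 0)) := by
        rw [nrm1_pair]
        simp only [Pi.sub_apply]
        rw [ENNReal.ofReal_add (abs_nonneg _) (abs_nonneg _)]



/-- in ℝ², along any obstacle-avoiding path γ from p to q of finite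
L1-length L, there is a point r on γ with σ₁(o,r) ≤ L, for any o ∈ B(p,q)
outside all obstacle interiors. -/
theorem statement_5 (O : Finset (Set (Pt 2))) (hO : IsObstacleFamily O)
    (p q o : Pt 2) (hp : p ∈ free O) (hq : q ∈ free O) (ho : o ∈ free O)
    (hbox : o ∈ corners p q)
    (γ : ℝ → Pt 2) (hγ : IsPathIn (free O) p q γ)
    (L : ℝ≥0∞) (hL : pathLen nrm1 γ = L) (hLfin : L ≠ ⊤) :
    ∃ r ∈ γ '' Set.Icc (0 : ℝ) 1, geo nrm1 (free O) o r ≤ L := by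
  classical
  obtain ⟨hγc, hγ0, hγ1, hγF⟩ := hγ
  set e : Pt 2 := fun i => if p i ≤ q i then (1:ℝ) else -1 with heDef
  have he : ∀ i, e i = 1 ∨ e i = -1 := fun i => by
    rw [heDef]; by_cases h : p i ≤ q i <;> simp [h]
  have hne0 : ∀ i, e i ≠ 0 := fun i => by rcases he i with h | h <;> rw [h] <;> norm_num
  have hbox' : o ∈ Set.Icc (p ⊓ q) (p ⊔ q) := hbox
  have hepo : ∀ i, e i * p i ≤ e i * o i ∧ e i * o i ≤ e i * q i := by
    intro i
    have h1 : min (p i) (q i) ≤ o i := by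
      have := (Set.mem_Icc.1 hbox').1 i
      simpa [Pi.inf_apply] using this
    have h2 : o i ≤ max (p i) (q i) := by
      have := (Set.mem_Icc.1 hbox').2 i
      simpa [Pi.sup_apply] using this
    rw [heDef]
    by_cases h : p i ≤ q i <;> simp [h]
    · rw [min_eq_left h] at h1; rw [max_eq_right h] at h2; exact ⟨h1, h2⟩
    · have hq' := (not_le.1 h).le
      rw [min_eq_right hq'] at h1; rw [max_eq_left hq'] at h2
      constructor <;> linarith
  obtain ⟨wp, hwpc, hwp0, hwpF, hwpP, hwpmx, hwpmy⟩ := armE O hO o ho e he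
  obtain ⟨wm, hwmc, hwm0, hwmF, hwmP, hwmmx, hwmmy⟩ := armE O hO o ho (fun i => -e i)
    (fun i => by rcases he i with h | h <;> simp [h])
  set δ : ℝ → Pt 2 := fun s => wp s + wm (-s) - o with hδDef
  have hδc : Continuous δ := (hwpc.add (hwmc.comp continuous_neg)).sub continuous_const
  have hδpos : ∀ s, 0 ≤ s → δ s = wp s := by
    intro s hs
    show wp s + wm (-s) - o = wp s
    rw [hwm0 (-s) (by linarith)]
    exact add_sub_cancel_right _ _
  have hδneg : ∀ s, s ≤ 0 → δ s = wm (-s) := by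
    intro s hs
    show wp s + wm (-s) - o = wm (-s)
    rw [hwp0 s hs]
    exact add_sub_cancel_left _ _
  have hδ0 : δ 0 = o := by rw [hδpos 0 le_rfl, hwp0 0 le_rfl]
  have hδF : ∀ s, δ s ∈ free O := by
    intro s; rcases le_total 0 s with hs | hs
    · rw [hδpos s hs]; exact hwpF s
    · rw [hδneg s hs]; exact hwmF (-s)
  have hδP : ∀ s, e 1 * δ s 1 - e 0 * δ s 0 = (e 1 * o 1 - e 0 * o 0) + s := by
    intro s; rcases le_total 0 s with hs | hs
    · rw [hδpos s hs]; exact hwpP s hs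
    · rw [hδneg s hs]
      have h := hwmP (-s) (by linarith)
      linarith
  have hδQ : ∀ s, (e 0 * δ s 0 ≤ e 0 * o 0 ∧ e 1 * o 1 ≤ e 1 * δ s 1)
      ∨ (e 0 * o 0 ≤ e 0 * δ s 0 ∧ e 1 * δ s 1 ≤ e 1 * o 1) := by
    intro s; rcases le_total 0 s with hs | hs
    · left; rw [hδpos s hs]
      constructor
      · have h := hwpmx 0 s hs; rwa [hwp0 0 le_rfl] at h
      · have h := hwpmy 0 s hs; rwa [hwp0 0 le_rfl] at h
    · right; rw [hδneg s hs]
      constructor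
      · have h := hwmmx 0 (-s) (by linarith); rw [hwm0 0 le_rfl] at h; linarith
      · have h := hwmmy 0 (-s) (by linarith); rw [hwm0 0 le_rfl] at h; linarith
  have hδmx : ∀ s t, s ≤ t → e 0 * δ t 0 ≤ e 0 * δ s 0 := by
    intro s t hst
    rcases le_total 0 s with hs | hs
    · rw [hδpos s hs, hδpos t (hs.trans hst)]; exact hwpmx s t hst
    · rcases le_total 0 t with ht | ht
      · rw [hδneg s hs, hδpos t ht]
        have h1 := hwpmx 0 t ht; rw [hwp0 0 le_rfl] at h1
        have h2 := hwmmx 0 (-s) (by linarith); rw [hwm0 0 le_rfl] at h2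
        linarith
      · rw [hδneg s hs, hδneg t ht]
        have h := hwmmx (-t) (-s) (by linarith)
        linarith
  have hδmy : ∀ s t, s ≤ t → e 1 * δ s 1 ≤ e 1 * δ t 1 := by
    intro s t hst
    rcases le_total 0 s with hs | hs
    · rw [hδpos s hs, hδpos t (hs.trans hst)]; exact hwpmy s t hst
    · rcases le_total 0 t with ht | ht
      · rw [hδneg s hs, hδpos t ht]
        have h1 := hwpmy 0 t ht; rw [hwp0 0 le_rfl] at h1
        have h2 := hwmmy 0 (-s) (by linarith); rw [hwm0 0 le_rfl] at h2
        linarith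
      · rw [hδneg s hs, hδneg t ht]
        have h := hwmmy (-t) (-s) (by linarith)
        linarith
  set C : ℝ := e 1 * o 1 - e 0 * o 0 with hCDef
  set τ : Pt 2 → ℝ := fun z => e 1 * z 1 - e 0 * z 0 - C with hτDef
  set g : Pt 2 → ℝ := fun z => e 0 * z 0 - e 0 * δ (τ z) 0 with hgDef
  have hτval : ∀ z, τ z = e 1 * z 1 - e 0 * z 0 - C := fun z => rfl
  have hgval : ∀ z, g z = e 0 * z 0 - e 0 * δ (τ z) 0 := fun z => rfl
  have hgalt : ∀ z, g z = e 1 * z 1 - e 1 * δ (τ z) 1 := by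
    intro z
    have h := hδP (τ z)
    have h2 := hτval z
    rw [hgval z]
    linarith
  have hτc : Continuous τ := by
    rw [hτDef]
    exact ((continuous_const.mul (continuous_apply 1)).sub
      (continuous_const.mul (continuous_apply 0))).sub continuous_const
  have hgc : Continuous g := by
    rw [hgDef]
    exact (continuous_const.mul (continuous_apply 0)).sub
      (continuous_const.mul ((continuous_apply 0).comp (hδc.comp hτc)))
  have hgp : g p ≤ 0 := by
    rcases hδQ (τ p) with ⟨h1, h2⟩ | ⟨h1, h2⟩
    · rw [hgalt p]
      have h3 := (hepo 1).1
      linarith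
    · rw [hgval p]
      have h3 := (hepo 0).1
      linarith
  have hgq : 0 ≤ g q := by
    rcases hδQ (τ q) with ⟨h1, h2⟩ | ⟨h1, h2⟩
    · rw [hgval q]
      have h3 := (hepo 0).2
      linarith
    · rw [hgalt q]
      have h3 := (hepo 1).2
      linarith
  have hcomp : ContinuousOn (fun x => g (γ x)) (Set.Icc 0 1) := hgc.comp_continuousOn hγc
  have h0m : (0:ℝ) ∈ Set.Icc ((fun x => g (γ x)) 0) ((fun x => g (γ x)) 1) := by
    simp only [hγ0, hγ1]
    exact ⟨hgp, hgq⟩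
  obtain ⟨t, htI, hgt⟩ := intermediate_value_Icc (by norm_num : (0:ℝ) ≤ 1) hcomp h0m
  have hgt' : g (γ t) = 0 := hgt
  have hrδ : γ t = δ (τ (γ t)) := by
    have h1 : e 0 * γ t 0 - e 0 * δ (τ (γ t)) 0 = 0 := by rw [← hgval (γ t)]; exact hgt'
    have h2 : e 1 * γ t 1 - e 1 * δ (τ (γ t)) 1 = 0 := by rw [← hgalt (γ t)]; exact hgt'
    have hc0 : γ t 0 = δ (τ (γ t)) 0 := mul_left_cancel₀ (hne0 0) (by linarith)
    have hc1 : γ t 1 = δ (τ (γ t)) 1 := mul_left_cancel₀ (hne0 1) (by linarith)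
    funext i
    fin_cases i
    · exact hc0
    · exact hc1
  set sr : ℝ := τ (γ t) with hsrDef
  set η : ℝ → Pt 2 := fun v => δ (v * sr) with hηDef
  have hη1 : η 1 = γ t := by show δ (1 * sr) = γ t; rw [one_mul, ← hrδ]
  have hη0 : η 0 = o := by show δ (0 * sr) = o; rw [zero_mul, hδ0]
  have hηpath : IsPathIn (free O) o (γ t) η := by
    refine ⟨(hδc.comp (continuous_id.mul continuous_const)).continuousOn, hη0, hη1,
      fun v _ => hδF _⟩
  have hmon : ∀ i : Fin 2, Monotone (fun v => η v i) ∨ Antitone (fun v => η v i) := by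
    intro i
    have hsigned : (∀ v w : ℝ, v ≤ w → e i * η w i ≤ e i * η v i) ∨
        (∀ v w : ℝ, v ≤ w → e i * η v i ≤ e i * η w i) := by
      fin_cases i
      · rcases le_total 0 sr with hs | hs
        · left; intro v w hvw
          exact hδmx (v * sr) (w * sr) (mul_le_mul_of_nonneg_right hvw hs)
        · right; intro v w hvw
          exact hδmx (w * sr) (v * sr) (mul_le_mul_of_nonpos_right hvw hs)
      · rcases le_total 0 sr with hs | hs
        · right; intro v w hvw
          exact hδmy (v * sr) (w * sr) (mul_le_mul_of_nonneg_right hvw hs)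
        · left; intro v w hvw
          exact hδmy (w * sr) (v * sr) (mul_le_mul_of_nonpos_right hvw hs)
    rcases he i with h | h <;> rcases hsigned with hh | hh
    · right; intro v w hvw
      show η w i ≤ η v i
      have hth := hh v w hvw; rw [h] at hth; simpa using hth
    · left; intro v w hvw
      show η v i ≤ η w i
      have hth := hh v w hvw; rw [h] at hth; simpa using hth
    · left; intro v w hvw
      show η v i ≤ η w i
      have hth := hh v w hvw; rw [h] at hth
      simp only [neg_one_mul] at hth; linarith
    · right; intro v w hvw
      show η w i ≤ η v i
      have hth := hh v w hvw; rw [h] at hth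
      simp only [neg_one_mul] at hth; linarith
  have habs1 : ∀ a b c : ℝ, a ≤ b → b ≤ c → |a - b| ≤ |a - c| := by
    intro a b c h1 h2
    rw [abs_sub_comm a b, abs_of_nonneg (by linarith), abs_sub_comm a c,
      abs_of_nonneg (by linarith)]
    linarith
  have habs2 : ∀ a b c : ℝ, c ≤ b → b ≤ a → |a - b| ≤ |a - c| := by
    intro a b c h1 h2
    rw [abs_of_nonneg (by linarith), abs_of_nonneg (by linarith)]
    linarith
  have hdist : nrm1 (γ t - o) ≤ nrm1 (γ t - p) + nrm1 (γ t - q) := by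
    rw [nrm1_pair, nrm1_pair, nrm1_pair]
    simp only [Pi.sub_apply]
    have hQ := hδQ sr
    rw [← hrδ] at hQ
    rcases hQ with ⟨h1, h2⟩ | ⟨h1, h2⟩
    · have ha : |γ t 0 - o 0| ≤ |γ t 0 - q 0| := by
        have h3 := (hepo 0).2
        rcases he 0 with h | h <;> rw [h] at h1 h3
        · exact habs1 _ _ _ (by linarith) (by linarith)
        · exact habs2 _ _ _ (by linarith) (by linarith)
      have hb : |γ t 1 - o 1| ≤ |γ t 1 - p 1| := by
        have h3 := (hepo 1).1
        rcases he 1 with h | h <;> rw [h] at h2 h3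
        · exact habs2 _ _ _ (by linarith) (by linarith)
        · exact habs1 _ _ _ (by linarith) (by linarith)
      linarith [abs_nonneg (γ t 0 - p 0), abs_nonneg (γ t 1 - q 1)]
    · have ha : |γ t 0 - o 0| ≤ |γ t 0 - p 0| := by
        have h3 := (hepo 0).1
        rcases he 0 with h | h <;> rw [h] at h1 h3
        · exact habs2 _ _ _ (by linarith) (by linarith)
        · exact habs1 _ _ _ (by linarith) (by linarith)
      have hb : |γ t 1 - o 1| ≤ |γ t 1 - q 1| := by
        have h3 := (hepo 1).2
        rcases he 1 with h | h <;> rw [h] at h2 h3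
        · exact habs1 _ _ _ (by linarith) (by linarith)
        · exact habs2 _ _ _ (by linarith) (by linarith)
      linarith [abs_nonneg (γ t 1 - p 1), abs_nonneg (γ t 0 - q 0)]
  refine ⟨γ t, ⟨t, htI, rfl⟩, ?_⟩
  calc geo nrm1 (free O) o (γ t) ≤ pathLen nrm1 η := by
        rw [geo]; exact iInf₂_le η hηpath
    _ ≤ ENNReal.ofReal (nrm1 (η 1 - η 0)) := pathLen_le η hmon
    _ = ENNReal.ofReal (nrm1 (γ t - o)) := by rw [hη1, hη0]
    _ ≤ ENNReal.ofReal (nrm1 (γ t - p) + nrm1 (γ t - q)) := ENNReal.ofReal_le_ofReal hdist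
    _ = ENNReal.ofReal (nrm1 (γ t - p)) + ENNReal.ofReal (nrm1 (γ t - q)) :=
        ENNReal.ofReal_add (nrm1_nonneg _) (nrm1_nonneg _)
    _ = ENNReal.ofReal (nrm1 (γ t - γ 0)) + ENNReal.ofReal (nrm1 (γ 1 - γ t)) := by
        rw [hγ0, hγ1, nrm1_sub_comm (γ t) q]
    _ ≤ pathLen nrm1 γ := pathLen_ge γ htI
    _ = L := hL

end GeoSpanner
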